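/- Let G be a finite simple graph and v a vertex of G with degree at most 2. If G − v is (2,1)-decomposable, then G is (2,1)-decomposable. -/

import Mathlib

/-- A graph `G` is `d`-degenerate if every nonempty (induced) subgraph has a
vertex of degree at most `d`. -/
def SimpleGraph.DegenerateLE {V : Type*} (G : SimpleGraph V) (d : ℕ) : Prop :=
  ∀ S : Set V, S.Nonempty → ∃ v ∈ S, (S ∩ G.neighborSet v).ncard ≤ d

/-- A graph `G` is `(d, h)`-decomposable if there is a subgraph `H` of `G` with
maximum degree at most `h` such that `G - E(H)` is `d`-degenerate. -/
def SimpleGraph.IsDecomposable {V : Type*} (G : SimpleGraph V) (d h : ℕ) : Prop :=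
  ∃ H : SimpleGraph V, H ≤ G ∧ (∀ v, (H.neighborSet v).ncard ≤ h) ∧
    (G \ H).DegenerateLE d

/-- If `v` is a vertex of degree at most `2` and `G - v` is `(2,1)`-decomposable,
then `G` is `(2,1)`-decomposable. -/
theorem statement1 {V : Type*} [Fintype V] (G : SimpleGraph V) (v : V)
    (hdeg : (G.neighborSet v).ncard ≤ 2)
    (h : (G.induce ({v}ᶜ : Set V)).IsDecomposable 2 1) :
    G.IsDecomposable 2 1 := by
  classical
  obtain ⟨H', hle', hdeg', hdegen'⟩ := h
  set f : ({v}ᶜ : Set V) ↪ V := Function.Embedding.subtype _ with hf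
  refine ⟨H'.map f, ?_, ?_, ?_⟩
  · -- H ≤ G
    intro x y hxy
    obtain ⟨-, a, b, hab, rfl, rfl⟩ := hxy
    exact hle' hab
  · -- max degree ≤ 1
    intro x
    by_cases hx : x = v
    · have : (H'.map f).neighborSet x = ∅ := by
        ext y
        simp only [SimpleGraph.mem_neighborSet, SimpleGraph.map_adj, Set.mem_empty_iff_false,
          iff_false]
        rintro ⟨a, b, hab, ha, rfl⟩
        exact a.2 (show (a : V) ∈ ({v} : Set V) by
          simp only [hf, Function.Embedding.coe_subtype] at ha
          simp [ha, hx])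
      simp [this]
    · have hxm : x ∈ ({v}ᶜ : Set V) := by simpa using hx
      have : (H'.map f).neighborSet x = f '' (H'.neighborSet ⟨x, hxm⟩) := by
        ext y
        simp only [SimpleGraph.mem_neighborSet, SimpleGraph.map_adj, Set.mem_image]
        constructor
        · rintro ⟨a, b, hab, ha, rfl⟩
          have : a = ⟨x, hxm⟩ := Subtype.ext (by simpa [hf] using ha)
          exact ⟨b, by rwa [this] at hab, rfl⟩
        · rintro ⟨b, hb, rfl⟩
          exact ⟨⟨x, hxm⟩, b, hb, rfl, rfl⟩
      rw [this, Set.ncard_image_of_injective _ f.injective]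
      exact hdeg' _
  · -- degeneracy
    intro S hS
    by_cases hv : v ∈ S
    · refine ⟨v, hv, ?_⟩
      refine le_trans (Set.ncard_le_ncard ?_ (Set.toFinite _)) hdeg
      intro y hy
      exact hy.2.1
    · obtain ⟨x, hxS⟩ := hS
      have hxm : x ∈ ({v}ᶜ : Set V) := by
        simp only [Set.mem_compl_iff, Set.mem_singleton_iff]
        rintro rfl; exact hv hxS
      set S' : Set ({v}ᶜ : Set V) := Subtype.val ⁻¹' S with hS'
      obtain ⟨u, huS', hu⟩ := hdegen' S' ⟨⟨x, hxm⟩, hxS⟩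
      refine ⟨(u : V), huS', ?_⟩
      have key : S ∩ (G \ H'.map f).neighborSet (u : V) =
          Subtype.val '' (S' ∩ (G.induce ({v}ᶜ : Set V) \ H').neighborSet u) := by
        ext y
        constructor
        · rintro ⟨hyS, hyAdj⟩
          have hym : y ∈ ({v}ᶜ : Set V) := by
            simp only [Set.mem_compl_iff, Set.mem_singleton_iff]
            rintro rfl; exact hv hyS
          refine ⟨⟨y, hym⟩, ⟨hyS, ?_⟩, rfl⟩
          obtain ⟨hG, hnH⟩ := hyAdj
          refine ⟨hG, fun hH' => hnH ?_⟩
          exact ⟨hG.ne, u, ⟨y, hym⟩, hH', rfl, rfl⟩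
        · rintro ⟨⟨b, hbm⟩, ⟨hbS, hbAdj⟩, rfl⟩
          obtain ⟨hG, hnH'⟩ := hbAdj
          refine ⟨hbS, hG, fun hH => ?_⟩
          obtain ⟨-, a, c, hac, ha, hc⟩ := hH
          have ha' : a = u := Subtype.ext (by simpa [hf] using ha)
          have hc' : c = ⟨b, hbm⟩ := Subtype.ext (by simpa [hf] using hc)
          exact hnH' (by rwa [ha', hc'] at hac)
      rw [key, Set.ncard_image_of_injective _ Subtype.val_injective]
      exact hu
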